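/- Let h be a ±1-valued step function on S¹ with intervals of constant sign [x₀,x₁],…,[xₙ,x_{n+1}] (x₀ = 0, x_{n+1} = 2π), and for small α = (α₁,…,αₙ) let F(α) ∈ V* be defined by F(α)(g) = Σ_{k=0}^{n} (−1)^k ∫_{x_k+α_k}^{x_{k+1}+α_{k+1}} g(x) dx (with α₀ = α_{n+1} = 0), where V is an n-dimensional Chebyshev system with basis g₁,…,gₙ. Then the differential of F at α = 0 has matrix entries ∂F(α)(gᵢ)/∂αⱼ|₀ = 2(−1)^{j+1} gᵢ(xⱼ), and this matrix is invertible. -/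

import Mathlib

open Real MeasureTheory

/-- Extend the perturbation vector `α = (α₁,…,αₙ)` of the interior partition points by
`α₀ = α_{n+1} = 0`. -/
noncomputable def padPerturbation {n : ℕ} (α : Fin n → ℝ) : Fin (n + 2) → ℝ :=
  Fin.cons 0 (Fin.snoc α 0)

/-- The map `F(α)(gᵢ) = ∑ₖ (-1)^k ∫_{x_k+α_k}^{x_{k+1}+α_{k+1}} gᵢ(x) dx`, given by
pairing the perturbed step function with a basis `g` of `V`. -/
noncomputable def perturbedPairing {n : ℕ} (x : Fin (n + 2) → ℝ)
    (g : Fin n → ℝ → ℝ) (α : Fin n → ℝ) : Fin n → ℝ :=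
  fun i => ∑ k : Fin (n + 1), (-1 : ℝ) ^ (k : ℕ) *
    ∫ s in (x k.castSucc + padPerturbation α k.castSucc)..(x k.succ + padPerturbation α k.succ),
      g i s

/-- The padding, as a family of continuous linear maps. -/
noncomputable def padL (n : ℕ) : Fin (n + 2) → ((Fin n → ℝ) →L[ℝ] ℝ) :=
  Fin.cons 0 (Fin.snoc (fun j => ContinuousLinearMap.proj j) 0)

lemma padL_apply {n : ℕ} (m : Fin (n + 2)) (α : Fin n → ℝ) :
    padL n m α = padPerturbation α m := by
  induction m using Fin.cases with
  | zero => simp [padL, padPerturbation]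
  | succ m' =>
    induction m' using Fin.lastCases with
    | last => rw [show padL n (Fin.last n).succ = 0 from by rw [padL, Fin.cons_succ, Fin.snoc_last], show padPerturbation α (Fin.last n).succ = 0 from by rw [padPerturbation, Fin.cons_succ, Fin.snoc_last]]; rfl
    | cast j => simp [padL, padPerturbation]

lemma padPerturbation_zero {n : ℕ} (m : Fin (n + 2)) :
    padPerturbation (0 : Fin n → ℝ) m = 0 := by
  induction m using Fin.cases with
  | zero => simp [padPerturbation]
  | succ m' =>
    induction m' using Fin.lastCases with
    | last => rw [padPerturbation, Fin.cons_succ, Fin.snoc_last]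
    | cast j => simp [padPerturbation]

/-- Let `h` be a `±1` step function on the circle with intervals of constant sign
`[x₀,x₁],…,[xₙ,x_{n+1}]` (`x₀ = 0`, `x_{n+1} = 2π`, interior points `x₁ < ⋯ < xₙ`), let
`V` be an `n`-dimensional Chebyshev system with basis `g₁,…,gₙ`, and let
`F(α)(gᵢ) = ∑ₖ (-1)^k ∫_{x_k+α_k}^{x_{k+1}+α_{k+1}} gᵢ` (with `α₀ = α_{n+1} = 0`). Then
the differential of `F` at `α = 0` is given by the matrix `(2·(-1)^{j+1} gᵢ(xⱼ))`
(indexing interior points by `j = 1,…,n`), and this matrix is invertible. -/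
theorem perturbedPairing_deriv (n : ℕ) (V : Submodule ℝ (ℝ → ℝ))
    (hVfd : FiniteDimensional ℝ V) (hVdim : Module.finrank ℝ V = n)
    (hVcont : ∀ g ∈ V, Continuous g ∧ Function.Periodic g (2 * π))
    (hCheb : ∀ g ∈ V, g ≠ 0 →
      {y ∈ Set.Ico (0 : ℝ) (2 * π) | g y = 0}.Finite ∧
      {y ∈ Set.Ico (0 : ℝ) (2 * π) | g y = 0}.ncard ≤ n - 1)
    (g : Fin n → ℝ → ℝ) (hgV : ∀ i, g i ∈ V)
    (hgind : LinearIndependent ℝ g)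
    (hgspan : Submodule.span ℝ (Set.range g) = V)
    (x : Fin (n + 2) → ℝ) (hx : StrictMono x)
    (hx0 : x 0 = 0) (hxl : x (Fin.last (n + 1)) = 2 * π) :
    HasFDerivAt (perturbedPairing x g)
      (LinearMap.toContinuousLinearMap (Matrix.toLin'
        (Matrix.of fun i j : Fin n => 2 * (-1 : ℝ) ^ (j : ℕ) * g i (x j.succ.castSucc))))
      0 ∧
    (Matrix.of fun i j : Fin n => 2 * (-1 : ℝ) ^ (j : ℕ) * g i (x j.succ.castSucc)).det ≠ 0 := by
  have hgc : ∀ i, Continuous (g i) := fun i => (hVcont _ (hgV i)).1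
  constructor
  · -- derivative part
    apply hasFDerivAt_pi''
    intro i
    -- rewrite the component via the antiderivative Φ
    set Φ : ℝ → ℝ := fun t => ∫ s in (0:ℝ)..t, g i s with hΦ
    have hcomp : (fun α => perturbedPairing x g α i)
        = fun α => ∑ k : Fin (n + 1), (-1 : ℝ) ^ (k : ℕ) *
            (Φ (x k.succ + padPerturbation α k.succ)
              - Φ (x k.castSucc + padPerturbation α k.castSucc)) := by
      funext α
      simp only [perturbedPairing]
      refine Finset.sum_congr rfl fun k _ => ?_
      rw [intervalIntegral.integral_interval_sub_left
        ((hgc i).intervalIntegrable _ _) ((hgc i).intervalIntegrable _ _)]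
    rw [hcomp]
    have hΦd : ∀ t : ℝ, HasDerivAt Φ (g i t) t := fun t =>
      intervalIntegral.integral_hasDerivAt_right ((hgc i).intervalIntegrable _ _)
        ((hgc i).stronglyMeasurable.stronglyMeasurableAtFilter) (hgc i).continuousAt
    -- derivative of each affine inner map
    have hinner : ∀ m : Fin (n + 2),
        HasFDerivAt (fun α : Fin n → ℝ => x m + padPerturbation α m) (padL n m) 0 := by
      intro m
      have : (fun α : Fin n → ℝ => x m + padPerturbation α m)
          = fun α => x m + padL n m α := by
        funext α; rw [padL_apply]
      rw [this]
      have h := (hasFDerivAt_const (x m) (0 : Fin n → ℝ)).add ((padL n m).hasFDerivAt)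
      rwa [zero_add] at h
    have hterm : ∀ m : Fin (n + 2),
        HasFDerivAt (fun α : Fin n → ℝ => Φ (x m + padPerturbation α m))
          (g i (x m) • padL n m) 0 := by
      intro m
      have h1 := (hΦd (x m + padPerturbation (0 : Fin n → ℝ) m)).comp_hasFDerivAt 0 (hinner m)
      rwa [padPerturbation_zero, add_zero] at h1
    have hsum : HasFDerivAt
        (fun α : Fin n → ℝ => ∑ k : Fin (n + 1), (-1 : ℝ) ^ (k : ℕ) *
            (Φ (x k.succ + padPerturbation α k.succ)
              - Φ (x k.castSucc + padPerturbation α k.castSucc)))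
        (∑ k : Fin (n + 1), ((-1 : ℝ) ^ (k : ℕ)) •
            (g i (x k.succ) • padL n k.succ - g i (x k.castSucc) • padL n k.castSucc)) 0 :=
      HasFDerivAt.fun_sum fun k _ => (((hterm k.succ).sub (hterm k.castSucc)).const_mul _)
    refine hsum.congr_fderiv (Eq.symm ?_)
    -- identify the two continuous linear maps
    ext v
    simp only [ContinuousLinearMap.comp_apply, ContinuousLinearMap.proj_apply,
      ContinuousLinearMap.sum_apply, ContinuousLinearMap.smul_apply,
      ContinuousLinearMap.sub_apply, LinearMap.coe_toContinuousLinearMap',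
      Matrix.toLin'_apply, Matrix.mulVec, Matrix.of_apply, dotProduct]
    have hpadl : padPerturbation v (Fin.last (n + 1)) = 0 := by
      rw [← Fin.succ_last, padPerturbation, Fin.cons_succ, Fin.snoc_last]
    have hpadj : ∀ j : Fin n, padPerturbation v j.succ.castSucc = v j := by
      intro j; rw [← Fin.succ_castSucc, padPerturbation, Fin.cons_succ, Fin.snoc_castSucc]
    set F : Fin (n + 2) → ℝ := fun m => (-1 : ℝ) ^ (m : ℕ) * g i (x m) * padPerturbation v m
      with hF
    have hR : ∀ k : Fin (n + 1), (-1 : ℝ) ^ (k : ℕ) •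
        (g i (x k.succ) • padL n k.succ v - g i (x k.castSucc) • padL n k.castSucc v)
        = -F k.succ - F k.castSucc := by
      intro k
      rw [padL_apply, padL_apply]
      simp only [hF, smul_eq_mul, Fin.val_succ, Fin.coe_castSucc, pow_succ]
      ring
    rw [Finset.sum_congr rfl fun k _ => hR k]
    have hF0 : F 0 = 0 := by simp [hF, padPerturbation]
    have hFl : F (Fin.last (n + 1)) = 0 := by simp [hF, hpadl]
    have hs1 : ∑ k : Fin (n + 1), F k.succ = ∑ m : Fin (n + 2), F m := by
      conv_rhs => rw [Fin.sum_univ_succ]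
      rw [hF0, zero_add]
    have hs2 : ∑ k : Fin (n + 1), F k.castSucc = ∑ m : Fin (n + 2), F m := by
      conv_rhs => rw [Fin.sum_univ_castSucc]
      rw [hFl, add_zero]
    have hs3 : ∑ m : Fin (n + 2), F m = ∑ j : Fin n, F j.succ.castSucc := by
      conv_lhs => rw [Fin.sum_univ_succ]
      rw [hF0, zero_add]
      conv_lhs => rw [Fin.sum_univ_castSucc]
      rw [Fin.succ_last, hFl, add_zero]
      exact Finset.sum_congr rfl fun j _ => by rw [Fin.succ_castSucc]
    rw [Finset.sum_sub_distrib, Finset.sum_neg_distrib, hs1, hs2, hs3]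
    have hFj : ∀ j : Fin n, F j.succ.castSucc
        = -((-1 : ℝ) ^ (j : ℕ) * g i (x j.succ.castSucc) * v j) := by
      intro j
      rw [hF]
      simp only [hpadj j, Fin.coe_castSucc, Fin.val_succ, pow_succ]
      ring
    rw [Finset.sum_congr rfl fun j _ => hFj j, Finset.sum_neg_distrib]
    rw [Finset.sum_congr rfl fun (j : Fin n) (_ : j ∈ Finset.univ) =>
      (show 2 * (-1 : ℝ) ^ (j : ℕ) * g i (x j.succ.castSucc) * v j
        = 2 * ((-1 : ℝ) ^ (j : ℕ) * g i (x j.succ.castSucc) * v j) from by ring),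
      ← Finset.mul_sum]
    ring
  · -- determinant part
    intro hdet
    set M := (Matrix.of (fun i j : Fin n => 2 * (-1 : ℝ) ^ (j : ℕ) * g i (x j.succ.castSucc)) : Matrix (Fin n) (Fin n) ℝ) with hM
    have hdetT : M.transpose.det = 0 := by rw [Matrix.det_transpose]; exact hdet
    obtain ⟨c, hc0, hc⟩ := (Matrix.exists_mulVec_eq_zero_iff).2 hdetT
    have hn : 0 < n := Nat.pos_of_ne_zero fun h => hc0 (by subst h; funext i; exact i.elim0)
    have hGz : ∀ j : Fin n, ∑ i, c i * g i (x j.succ.castSucc) = 0 := by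
      intro j
      have h1 : M.transpose.mulVec c j = 0 := congrFun hc j
      have h2 : (2 * (-1 : ℝ) ^ (j : ℕ)) * ∑ i, c i * g i (x j.succ.castSucc) = 0 := by
        rw [Finset.mul_sum]
        rw [← h1]
        simp only [Matrix.mulVec, dotProduct, Matrix.transpose_apply, hM,
          Matrix.of_apply]
        exact Finset.sum_congr rfl fun i _ => by ring
      have h3 : (2 * (-1 : ℝ) ^ (j : ℕ)) ≠ 0 :=
        mul_ne_zero two_ne_zero (pow_ne_zero _ (by norm_num))
      exact (mul_eq_zero.1 h2).resolve_left h3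
    set G : ℝ → ℝ := fun y => ∑ i, c i * g i y with hG
    have hGV : G ∈ V := by
      have hGeq : G = ∑ i, c i • g i := by
        funext y; simp [hG, Finset.sum_apply]
      rw [hGeq]
      exact Submodule.sum_mem _ fun i _ => Submodule.smul_mem _ _ (hgV i)
    have hGne : G ≠ 0 := by
      intro h
      apply hc0
      have hz : ∑ i, c i • g i = 0 := by
        funext y
        have := congrFun h y
        simpa [hG, Finset.sum_apply] using this
      have := Fintype.linearIndependent_iff.1 hgind c hz
      funext i; exact this i
    obtain ⟨hfin, hcard⟩ := hCheb G hGV hGne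
    set S := {y ∈ Set.Ico (0:ℝ) (2 * π) | G y = 0} with hS
    have hmem : ∀ j : Fin n, x j.succ.castSucc ∈ S := by
      intro j
      refine ⟨⟨?_, ?_⟩, hGz j⟩
      · rw [← hx0]
        exact le_of_lt (hx (by simp [Fin.lt_def]))
      · rw [← hxl]
        exact hx (by simp [Fin.lt_def, Fin.val_last])
    have hinj : Function.Injective (fun j : Fin n => x j.succ.castSucc) :=
      hx.injective.comp ((Fin.castSucc_injective _).comp (Fin.succ_injective _))
    have hsub : Set.range (fun j : Fin n => x j.succ.castSucc) ⊆ S := by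
      rintro _ ⟨j, rfl⟩; exact hmem j
    have hle : n ≤ S.ncard := by
      have h1 : (Set.range (fun j : Fin n => x j.succ.castSucc)).ncard = n := by
        rw [← Set.image_univ, Set.ncard_image_of_injective _ hinj, Set.ncard_univ,
          Nat.card_eq_fintype_card, Fintype.card_fin]
      rw [← h1]
      exact Set.ncard_le_ncard hsub hfin
    omega
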